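/- Let T be a finite tree with at least 2 vertices and let c be a proper coloring of T. Then there exists an up-color dominating c-set D of T of minimum cardinality among all up-color dominating c-sets of T such that for every vertex v in D, if v has a neighbor u in D with c(u) > c(v), then v has at least one neighbor w with c(w) < c(v). -/
import Mathlib


/-- `D` is an up-color dominating `c`-set of `G`. -/
def IsUCDomSet {V : Type*} (G : SimpleGraph V) (c : V → ℕ) (D : Finset V) : Prop :=
  (∀ v ∉ D, ∃ d ∈ D, G.Adj v d ∧ c v < c d) ∧ ∀ d ∈ D, 1 ≤ c d

theorem stmt_14 {V : Type*} [Fintype V] (T : SimpleGraph V)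
    (hT : T.IsTree) (hcard : 2 ≤ Fintype.card V)
    (c : V → ℕ) (hc : ∀ ⦃u v⦄, T.Adj u v → c u ≠ c v) :
    ∃ D : Finset V, IsUCDomSet T c D ∧
      (∀ D' : Finset V, IsUCDomSet T c D' → D.card ≤ D'.card) ∧
      ∀ v ∈ D, (∃ u ∈ D, T.Adj v u ∧ c v < c u) → ∃ w, T.Adj v w ∧ c w < c v := by
  classical
  -- every vertex has a neighbor
  have hnbr : ∀ v : V, ∃ w, T.Adj v w := by
    intro v
    obtain ⟨u, hu⟩ := Fintype.exists_ne_of_one_lt_card (by omega) v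
    obtain ⟨p⟩ := hT.isConnected.preconnected v u
    cases p with
    | nil => exact absurd rfl hu
    | cons h p => exact ⟨_, h⟩
  -- there is some UC dominating set
  have hex : ∃ D : Finset V, IsUCDomSet T c D := by
    refine ⟨Finset.univ.filter (fun v => 1 ≤ c v), ?_, ?_⟩
    · intro v hv
      rw [Finset.mem_filter] at hv
      push_neg at hv
      have hv' := hv (Finset.mem_univ v)
      obtain ⟨w, hw⟩ := hnbr v
      have hcw : c w ≠ c v := (hc hw).symm
      refine ⟨w, ?_, hw, ?_⟩
      · rw [Finset.mem_filter]
        exact ⟨Finset.mem_univ w, by omega⟩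
      · omega
    · intro d hd
      simpa using hd
  -- pick a minimum-cardinality one
  obtain ⟨D, hD, hmin⟩ := Finset.exists_min_image
    (Finset.univ.filter (fun D : Finset V => IsUCDomSet T c D)) Finset.card
    (by obtain ⟨D, hD⟩ := hex; exact ⟨D, by simpa using hD⟩)
  simp only [Finset.mem_filter, Finset.mem_univ, true_and] at hD
  have hmin' : ∀ D' : Finset V, IsUCDomSet T c D' → D.card ≤ D'.card := by
    intro D' hD'
    exact hmin D' (by simpa using hD')
  refine ⟨D, hD, hmin', ?_⟩
  intro v hv ⟨u, hu, hadj, hcu⟩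
  by_contra hno
  push_neg at hno
  -- all neighbors of v have color > c v
  have hall : ∀ w, T.Adj v w → c v < c w := by
    intro w hw
    have := hno w hw
    have := hc hw
    omega
  -- D \ {v} is still a UC dominating set
  have hD' : IsUCDomSet T c (D.erase v) := by
    constructor
    · intro x hx
      by_cases hxv : x = v
      · subst hxv
        exact ⟨u, Finset.mem_erase.2 ⟨hadj.ne', hu⟩, hadj, hcu⟩
      · have hxD : x ∉ D := fun h => hx (Finset.mem_erase.2 ⟨hxv, h⟩)
        obtain ⟨d, hd, hadj', hcd⟩ := hD.1 x hxD
        refine ⟨d, Finset.mem_erase.2 ⟨?_, hd⟩, hadj', hcd⟩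
        rintro rfl
        exact absurd hcd (not_lt.2 (le_of_lt (hall x hadj'.symm)))
    · intro d hd
      exact hD.2 d (Finset.mem_erase.1 hd).2
  have := hmin' _ hD'
  have hlt : (D.erase v).card < D.card := Finset.card_erase_lt_of_mem hv
  omega
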